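/- For any finite simple graph G and any vertex v of G, the min-plus tropical dot product dimension satisfies ρ_T(G) ≤ ρ_T(G − v) + 1, where G − v is the subgraph of G induced on V(G) \ {v}. -/

import Mathlib

/-- A min-plus `k`-tropical dot product representation of `G` with threshold `t`:
distinct vertices `x, y` are adjacent iff `min_{1 ≤ i ≤ k} (f(x)_i + f(y)_i) ≥ t`
(equivalently, every coordinate sum is at least `t`). -/
def MinPlusRep {V : Type*} (G : SimpleGraph V) (k : ℕ) (f : V → Fin k → ℝ) (t : ℝ) : Prop :=
  0 < t ∧ ∀ x y : V, x ≠ y → (G.Adj x y ↔ ∀ i : Fin k, t ≤ f x i + f y i)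

/-- The min-plus tropical dot product dimension `ρ_T(G)`. -/
noncomputable def rhoT {V : Type*} (G : SimpleGraph V) : ℕ :=
  sInf {k : ℕ | 0 < k ∧ ∃ (f : V → Fin k → ℝ) (t : ℝ), MinPlusRep G k f t}

/-- Every finite graph has a min-plus representation. -/
lemma exists_minPlusRep {W : Type*} [Finite W] (H : SimpleGraph W) :
    ∃ k, 0 < k ∧ ∃ (f : W → Fin k → ℝ) (t : ℝ), MinPlusRep H k f t := by
  classical
  haveI := Fintype.ofFinite W
  set k := Fintype.card (Option (W × W)) with hk
  have hkpos : 0 < k := Fintype.card_pos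
  let e : Fin k ≃ Option (W × W) := (Fintype.equivFin (Option (W × W))).symm
  let P : W → Option (W × W) → Prop := fun w o =>
    ∃ a b, o = some (a, b) ∧ a ≠ b ∧ ¬ H.Adj a b ∧ (w = a ∨ w = b)
  let F : W → Option (W × W) → ℝ := fun w o => if P w o then 0 else 1
  refine ⟨k, hkpos, fun w i => F w (e i), 1, one_pos, fun x y hxy => ?_⟩
  constructor
  · intro hadj i
    by_cases hx : P x (e i) <;> by_cases hy : P y (e i)
    · exfalso
      obtain ⟨a, b, hab, hne, hnadj, hxab⟩ := hx
      obtain ⟨a', b', hab', hne', hnadj', hyab⟩ := hy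
      rw [hab] at hab'
      obtain ⟨rfl, rfl⟩ : a = a' ∧ b = b' := by
        injection hab' with h; exact ⟨congrArg Prod.fst h, congrArg Prod.snd h⟩
      rcases hxab with rfl | rfl <;> rcases hyab with rfl | rfl
      · exact hxy rfl
      · exact hnadj hadj
      · exact hnadj (H.adj_symm hadj)
      · exact hxy rfl
    · simp only [F, if_pos hx, if_neg hy]; norm_num
    · simp only [F, if_neg hx, if_pos hy]; norm_num
    · simp only [F, if_neg hx, if_neg hy]; norm_num
  · intro h
    by_contra hnadj
    have hx : P x (some (x, y)) := ⟨x, y, rfl, hxy, hnadj, Or.inl rfl⟩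
    have hy : P y (some (x, y)) := ⟨x, y, rfl, hxy, hnadj, Or.inr rfl⟩
    have := h (e.symm (some (x, y)))
    simp only [Equiv.apply_symm_apply] at this
    simp only [F, if_pos hx, if_pos hy] at this
    linarith

/-- For any vertex `v`, `ρ_T(G) ≤ ρ_T(G − v) + 1`. -/
theorem stmt_1 {V : Type*} [Fintype V] (G : SimpleGraph V) (v : V) :
    rhoT G ≤ rhoT (G.induce ({v}ᶜ : Set V)) + 1 := by
  classical
  set H := G.induce ({v}ᶜ : Set V) with hH
  set S : Set ℕ := {k : ℕ | 0 < k ∧ ∃ (f : ({v}ᶜ : Set V) → Fin k → ℝ) (t : ℝ), MinPlusRep H k f t}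
    with hS
  have hSne : S.Nonempty := by
    obtain ⟨k, hk, f, t, hrep⟩ := exists_minPlusRep H
    exact ⟨k, hk, f, t, hrep⟩
  set n := rhoT H with hn
  have hmem : n ∈ S := Nat.sInf_mem hSne
  obtain ⟨-, f, t, ht, hrep⟩ := hmem
  haveI : Fintype ({v}ᶜ : Set V) := Fintype.ofFinite _
  -- big values for v on the first n coordinates
  set B : Fin n → ℝ := fun i => t + ∑ w : ({v}ᶜ : Set V), |f w i| with hB
  have hBle : ∀ (w : ({v}ᶜ : Set V)) (i : Fin n), t ≤ B i + f w i := by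
    intro w i
    have h1 : |f w i| ≤ ∑ w' : ({v}ᶜ : Set V), |f w' i| :=
      Finset.single_le_sum (fun a _ => abs_nonneg (f a i)) (Finset.mem_univ w)
    have h2 : -f w i ≤ |f w i| := neg_le_abs _
    simp only [hB]
    linarith
  have memc : ∀ x : V, x ≠ v → x ∈ ({v}ᶜ : Set V) := fun x hx => by simpa using hx
  set g : V → Fin (n + 1) → ℝ := fun x =>
    if hx : x = v then Fin.snoc B 0
    else Fin.snoc (f ⟨x, memc x hx⟩) (if G.Adj v x then t else t / 2) with hg
  have key : ∀ y : V, y ≠ v → (G.Adj v y ↔ ∀ i : Fin (n + 1), t ≤ g v i + g y i) := by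
    intro y hy
    simp only [hg, dif_pos rfl, dif_neg hy]
    constructor
    · intro hadj
      refine Fin.lastCases ?_ ?_
      · rw [Fin.snoc_last, Fin.snoc_last, if_pos hadj]; linarith
      · intro j
        rw [Fin.snoc_castSucc, Fin.snoc_castSucc]
        exact hBle _ _
    · intro h
      have := h (Fin.last n)
      rw [Fin.snoc_last, Fin.snoc_last] at this
      by_contra hnadj
      rw [if_neg hnadj] at this
      linarith
  have hrepG : MinPlusRep G (n + 1) g t := by
    refine ⟨ht, fun x y hxy => ?_⟩
    by_cases hx : x = v
    · rw [hx]
      exact key y (fun h => hxy (hx.trans h.symm))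
    · by_cases hy : y = v
      · rw [hy, G.adj_comm]
        refine (key x hx).trans ⟨fun h i => ?_, fun h i => ?_⟩ <;> linarith [h i]
      · simp only [hg, dif_neg hx, dif_neg hy]
        have hne : (⟨x, memc x hx⟩ : ({v}ᶜ : Set V)) ≠ ⟨y, memc y hy⟩ := by
          simp [Subtype.ext_iff, hxy]
        have hadj_iff : G.Adj x y ↔ H.Adj ⟨x, memc x hx⟩ ⟨y, memc y hy⟩ := by
          simp [hH, SimpleGraph.induce]
        rw [hadj_iff, hrep _ _ hne]
        constructor
        · intro h
          refine Fin.lastCases ?_ ?_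
          · rw [Fin.snoc_last, Fin.snoc_last]
            split_ifs <;> linarith
          · intro j
            rw [Fin.snoc_castSucc, Fin.snoc_castSucc]
            exact h j
        · intro h j
          have := h (Fin.castSucc j)
          rwa [Fin.snoc_castSucc, Fin.snoc_castSucc] at this
  exact Nat.sInf_le ⟨Nat.succ_pos n, g, t, hrepG⟩
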